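/- Fix σ ∈ ℝ^{n-1} with σ_i + 1 ≠ 0 for i = 1,...,n-2 and σ_{n-1} = 0. Then x̄ defined by x̄_i = (σ_{i-1} + 2)/(2(σ_i + 1)) for i = 1,...,n-1 (with the convention σ_0 = 0) and x̄_n = x̄_{n-1}² is a critical point of x ↦ Ξ(x, σ), i.e., ∇_x Ξ(x̄, σ) = 0. -/

import Mathlib

noncomputable def Xi (m : ℕ) (α : ℝ) (x : Fin (m+1) → ℝ) (σ : Fin m → ℝ) : ℝ :=
  ∑ i : Fin m, ((x i.castSucc - 1)^2 + σ i * ((x i.castSucc)^2 - x i.succ) - (σ i)^2 / (2*α))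

/-- The backward shift σ_{i-1}, with the convention σ_0 = 0. -/
noncomputable def spre (m : ℕ) (σ : Fin m → ℝ) (i : Fin m) : ℝ :=
  if h : 0 < (i : ℕ) then σ ⟨(i : ℕ) - 1, by have := i.isLt; omega⟩ else 0

theorem xbar_critical_of_Xi (m : ℕ) (hm : 1 ≤ m) (α : ℝ) (hα : 0 < α)
    (σ : Fin m → ℝ) (hσ : ∀ i : Fin m, σ i + 1 ≠ 0)
    (hlast : σ ⟨m - 1, by omega⟩ = 0)
    (xbar : Fin (m+1) → ℝ)
    (hx : ∀ i : Fin m, xbar i.castSucc = (spre m σ i + 2) / (2 * (σ i + 1)))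
    (hxn : xbar (Fin.last m) = (xbar ⟨m - 1, by omega⟩)^2) :
    fderiv ℝ (fun x => Xi m α x σ) xbar = 0 := by
  set P : Fin (m+1) → (Fin (m+1) → ℝ) →L[ℝ] ℝ := fun j => ContinuousLinearMap.proj j with hP
  set L : Fin m → (Fin (m+1) → ℝ) →L[ℝ] ℝ := fun i =>
    ((2 * (xbar i.castSucc - 1)) • P i.castSucc +
      σ i • ((2 * xbar i.castSucc) • P i.castSucc - P i.succ)) with hL
  have hD : HasFDerivAt (fun x => Xi m α x σ) (∑ i : Fin m, L i) xbar := by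
    unfold Xi
    apply HasFDerivAt.fun_sum
    intro i _
    have h1 : HasFDerivAt (fun x : Fin (m+1) → ℝ => x i.castSucc) (P i.castSucc) xbar :=
      hasFDerivAt_apply i.castSucc xbar
    have h2 : HasFDerivAt (fun x : Fin (m+1) → ℝ => x i.succ) (P i.succ) xbar :=
      hasFDerivAt_apply i.succ xbar
    have ha : HasFDerivAt (fun x : Fin (m+1) → ℝ => (x i.castSucc - 1)^2)
        ((2 * (xbar i.castSucc - 1)) • P i.castSucc) xbar := by
      have q := h1.sub_const 1
      have := q.fun_mul q
      simpa [pow_two, two_mul, add_smul] using this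
    have hb : HasFDerivAt (fun x : Fin (m+1) → ℝ => σ i * ((x i.castSucc)^2 - x i.succ))
        (σ i • ((2 * xbar i.castSucc) • P i.castSucc - P i.succ)) xbar := by
      have := ((h1.fun_mul h1).sub h2).const_mul (σ i)
      simpa [pow_two, two_mul, add_smul] using this
    simpa [hL] using (ha.add hb).sub_const ((σ i)^2 / (2*α))
  rw [hD.fderiv]
  -- coefficient simplification: 2*(x̄-1) + 2σx̄ = spre
  have hcoef : ∀ i : Fin m, L i = (spre m σ i) • P i.castSucc - σ i • P i.succ := by
    intro i
    have key : 2 * (xbar i.castSucc - 1) + σ i * (2 * xbar i.castSucc) = spre m σ i := by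
      have h2 : (2:ℝ) * (σ i + 1) * xbar i.castSucc = spre m σ i + 2 := by
        rw [hx i, mul_comm]
        exact div_mul_cancel₀ _ (mul_ne_zero two_ne_zero (hσ i))
      linear_combination h2
    rw [hL]
    ext v
    simp only [ContinuousLinearMap.add_apply, ContinuousLinearMap.sub_apply,
      ContinuousLinearMap.smul_apply, smul_eq_mul]
    linear_combination key * ((P i.castSucc) v)
  ext v
  simp only [ContinuousLinearMap.sum_apply, ContinuousLinearMap.zero_apply]
  rw [Finset.sum_congr rfl (fun i _ => by rw [hcoef i])]
  simp only [ContinuousLinearMap.sub_apply, ContinuousLinearMap.smul_apply, smul_eq_mul, hP,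
    ContinuousLinearMap.proj_apply]
  rw [Finset.sum_sub_distrib]
  obtain ⟨k, rfl⟩ : ∃ k, m = k + 1 := ⟨m - 1, by omega⟩
  have hlhs : ∑ i : Fin (k+1), spre (k+1) σ i * v i.castSucc
      = ∑ j : Fin k, σ j.castSucc * v j.succ.castSucc := by
    rw [Fin.sum_univ_succ]
    have h0 : spre (k+1) σ 0 = 0 := by simp [spre]
    rw [h0, zero_mul, zero_add]
    apply Finset.sum_congr rfl
    intro j _
    have hs : spre (k+1) σ j.succ = σ j.castSucc := by
      simp only [spre, Fin.val_succ]
      rw [dif_pos (by omega)]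
      exact congrArg σ (by ext; simp)
    rw [hs]
  have hrhs : ∑ i : Fin (k+1), σ i * v i.succ
      = ∑ j : Fin k, σ j.castSucc * v j.castSucc.succ := by
    rw [Fin.sum_univ_castSucc]
    have hl : σ (Fin.last k) = 0 := by
      rw [show Fin.last k = (⟨k + 1 - 1, by omega⟩ : Fin (k+1)) from by ext; simp]
      exact hlast
    rw [hl, zero_mul, add_zero]
  rw [hlhs, hrhs]
  rw [sub_eq_zero]
  apply Finset.sum_congr rfl
  intro j _
  rw [Fin.succ_castSucc]
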